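/- arXiv:2605.04536 — 2 statements merged into one kernel-verified Lean document; each statement's English description precedes it below -/
import Mathlib

section
/- Let P₁, P₂ be probability measures on ℝ and φ(x) = exp(−x²/(2s²)), s > 0. If ∫ x^j φ(x) dP₁(x) = ∫ x^j φ(x) dP₂(x) for all nonnegative integers j, then P₁ = P₂. -/
open MeasureTheory Real Complex Filter Set Topology

noncomputable section StmtAux13

namespace StmtAux13

variable {s : ℝ}

/-- pointwise bound -/
lemma pt_bound (hs : 0 < s) (j : ℕ) {ε : ℝ} (hε : 0 < ε) (x : ℝ) :
    |x| ^ j * Real.exp (-(x ^ 2) / (2 * s ^ 2)) ≤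
      (j.factorial : ℝ) * ε⁻¹ ^ j * Real.exp (ε ^ 2 * s ^ 2 / 2) := by
  have h1 : |x| ^ j ≤ (j.factorial : ℝ) * ε⁻¹ ^ j * Real.exp (ε * |x|) := by
    have h2 : (ε * |x|) ^ j / (j.factorial : ℝ) ≤ Real.exp (ε * |x|) :=
      Real.pow_div_factorial_le_exp _ (by positivity) j
    have h3 : 0 < (j.factorial : ℝ) := by positivity
    rw [mul_pow] at h2
    have := (div_le_iff₀ h3).mp h2
    calc |x| ^ j = (ε⁻¹ ^ j * ε ^ j) * |x| ^ j := by
          rw [← mul_pow, inv_mul_cancel₀ (ne_of_gt hε), one_pow, one_mul]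
      _ = ε⁻¹ ^ j * (ε ^ j * |x| ^ j) := by ring
      _ ≤ ε⁻¹ ^ j * (Real.exp (ε * |x|) * (j.factorial : ℝ)) := by
          apply mul_le_mul_of_nonneg_left this (by positivity)
      _ = (j.factorial : ℝ) * ε⁻¹ ^ j * Real.exp (ε * |x|) := by ring
  calc |x| ^ j * Real.exp (-(x ^ 2) / (2 * s ^ 2))
      ≤ ((j.factorial : ℝ) * ε⁻¹ ^ j * Real.exp (ε * |x|)) * Real.exp (-(x ^ 2) / (2 * s ^ 2)) :=
        mul_le_mul_of_nonneg_right h1 (Real.exp_nonneg _)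
    _ = (j.factorial : ℝ) * ε⁻¹ ^ j * Real.exp (ε * |x| + -(x ^ 2) / (2 * s ^ 2)) := by
        rw [Real.exp_add]; ring
    _ ≤ (j.factorial : ℝ) * ε⁻¹ ^ j * Real.exp (ε ^ 2 * s ^ 2 / 2) := by
        apply mul_le_mul_of_nonneg_left _ (by positivity)
        apply Real.exp_le_exp.mpr
        rw [← sub_nonneg, ← _root_.sq_abs x]
        have hid : ε ^ 2 * s ^ 2 / 2 - (ε * |x| + -(|x| ^ 2) / (2 * s ^ 2)) =
            (|x| - ε * s ^ 2) ^ 2 / (2 * s ^ 2) := by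
          field_simp
          ring
        rw [hid]
        positivity

end StmtAux13

namespace StmtAux13

/-- complex Gaussian weight -/
def φc (s : ℝ) : ℝ → ℂ := fun x => ((Real.exp (-(x ^ 2) / (2 * s ^ 2)) : ℝ) : ℂ)

lemma φc_cont (s : ℝ) : Continuous (φc s) := by
  apply Complex.continuous_ofReal.comp
  exact Real.continuous_exp.comp (by continuity)

lemma fourier_series (hs : 0 < s) (P : Measure ℝ) [IsProbabilityMeasure P] (w : ℝ) :
    VectorFourier.fourierIntegral Real.fourierChar P (LinearMap.mul ℝ ℝ) (φc s) w =
      ∑' j : ℕ, (((-(2 * π * w) : ℝ) : ℂ) * Complex.I) ^ j / (j.factorial : ℂ) *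
        ((∫ x, x ^ j * Real.exp (-(x ^ 2) / (2 * s ^ 2)) ∂P : ℝ) : ℂ) := by
  set c : ℂ := ((-(2 * π * w) : ℝ) : ℂ) * Complex.I with hc
  set E : ℝ := Real.exp ((2 * ‖c‖ + 1) ^ 2 * s ^ 2 / 2) with hE
  set ε : ℝ := 2 * ‖c‖ + 1 with hεdef
  have hε : 0 < ε := by positivity
  set F : ℕ → ℝ → ℂ := fun j x => c ^ j / (j.factorial : ℂ) * ((x : ℂ) ^ j * φc s x) with hF
  have hnorm : ∀ j x, ‖F j x‖ =
      ‖c‖ ^ j / (j.factorial : ℝ) * (|x| ^ j * Real.exp (-(x ^ 2) / (2 * s ^ 2))) := by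
    intro j x
    simp only [hF, φc, norm_mul, norm_div, norm_pow, Complex.norm_real, Real.norm_eq_abs,
      Complex.norm_natCast, Real.abs_exp]
  have hptb : ∀ j x, ‖F j x‖ ≤ (‖c‖ / ε) ^ j * E := by
    intro j x
    rw [hnorm j x]
    have h0 : 0 ≤ ‖c‖ ^ j / (j.factorial : ℝ) := by positivity
    calc ‖c‖ ^ j / (j.factorial : ℝ) * (|x| ^ j * Real.exp (-(x ^ 2) / (2 * s ^ 2)))
        ≤ ‖c‖ ^ j / (j.factorial : ℝ) * ((j.factorial : ℝ) * ε⁻¹ ^ j * E) :=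
          mul_le_mul_of_nonneg_left (pt_bound hs j hε x) h0
      _ = (‖c‖ / ε) ^ j * E := by
          have : (j.factorial : ℝ) ≠ 0 := by positivity
          field_simp [div_pow]
          ring
  have hcont : ∀ j, Continuous (F j) := by
    intro j
    exact continuous_const.mul ((Complex.continuous_ofReal.pow j).mul (φc_cont s))
  have hinteg : ∀ j, Integrable (F j) P := by
    intro j
    refine Integrable.mono' (integrable_const ((‖c‖ / ε) ^ j * E)) ((hcont j).aestronglyMeasurable)
      (ae_of_all _ fun x => hptb j x)
  have hr1 : ‖c‖ / ε < 1 := by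
    rw [div_lt_one hε, hεdef]
    nlinarith [norm_nonneg c]
  have hr0 : 0 ≤ ‖c‖ / ε := by positivity
  have hsum : Summable fun j => ∫ x, ‖F j x‖ ∂P := by
    apply Summable.of_nonneg_of_le (fun j => integral_nonneg fun x => norm_nonneg _)
      (fun j => ?_) ((summable_geometric_of_lt_one hr0 hr1).mul_right E)
    calc ∫ x, ‖F j x‖ ∂P ≤ ∫ _, (‖c‖ / ε) ^ j * E ∂P :=
          integral_mono (hinteg j).norm (integrable_const _) fun x => hptb j x
      _ = (‖c‖ / ε) ^ j * E := by simp
  have hpt : ∀ x : ℝ, Real.fourierChar (-(LinearMap.mul ℝ ℝ x w)) • φc s x = ∑' j, F j x := by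
    intro x
    have e1 : Real.fourierChar (-(LinearMap.mul ℝ ℝ x w)) • φc s x =
        Complex.exp (c * x) * φc s x := by
      rw [Circle.smul_def, Real.fourierChar_apply]
      simp only [LinearMap.mul_apply']
      rw [show ((2 * π * -(x * w) : ℝ) : ℂ) * Complex.I = c * x by rw [hc]; push_cast; ring]
      rw [smul_eq_mul]
    rw [e1, Complex.exp_eq_exp_ℂ, NormedSpace.exp_eq_tsum_div, ← tsum_mul_right]
    congr 1
    funext j
    rw [hF]
    simp only []
    rw [mul_pow]
    ring
  calc VectorFourier.fourierIntegral Real.fourierChar P (LinearMap.mul ℝ ℝ) (φc s) w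
      = ∫ x, ∑' j, F j x ∂P := by
        rw [VectorFourier.fourierIntegral]
        exact integral_congr_ae (ae_of_all _ hpt)
    _ = ∑' j, ∫ x, F j x ∂P := (integral_tsum_of_summable_integral_norm hinteg hsum).symm
    _ = ∑' j : ℕ, c ^ j / (j.factorial : ℂ) *
        ((∫ x, x ^ j * Real.exp (-(x ^ 2) / (2 * s ^ 2)) ∂P : ℝ) : ℂ) := by
        congr 1
        funext j
        rw [hF]
        simp only []
        rw [MeasureTheory.integral_const_mul]
        congr 1
        rw [show (fun x : ℝ => (x : ℂ) ^ j * φc s x) =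
          fun x : ℝ => ((x ^ j * Real.exp (-(x ^ 2) / (2 * s ^ 2)) : ℝ) : ℂ) by
            funext x; rw [φc]; push_cast; ring]
        exact integral_ofReal

end StmtAux13

namespace StmtAux13

lemma norm_φc_le_one (s x : ℝ) : ‖φc s x‖ ≤ 1 := by
  rw [φc, Complex.norm_real, Real.norm_eq_abs, Real.abs_exp]
  rw [Real.exp_le_one_iff]
  apply div_nonpos_of_nonpos_of_nonneg
  · simp [sq_nonneg]
  · positivity

lemma φc_integrable (s : ℝ) (P : Measure ℝ) [IsProbabilityMeasure P] :
    Integrable (φc s) P :=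
  Integrable.mono' (integrable_const 1) (φc_cont s).aestronglyMeasurable
    (ae_of_all _ fun x => norm_φc_le_one s x)

lemma mul_flip : (LinearMap.mul ℝ ℝ).flip = LinearMap.mul ℝ ℝ := by
  ext x y
  simp [mul_comm]

lemma schwartz_eq (hs : 0 < s) (P₁ P₂ : Measure ℝ)
    [IsProbabilityMeasure P₁] [IsProbabilityMeasure P₂]
    (h : ∀ j : ℕ, ∫ x, x ^ j * Real.exp (-(x ^ 2) / (2 * s ^ 2)) ∂P₁ =
      ∫ x, x ^ j * Real.exp (-(x ^ 2) / (2 * s ^ 2)) ∂P₂)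
    (f : SchwartzMap ℝ ℂ) :
    ∫ x, φc s x * f x ∂P₁ = ∫ x, φc s x * f x ∂P₂ := by
  set g : SchwartzMap ℝ ℂ := FourierTransform.fourierInv f with hg
  have hgF : FourierTransform.fourier (⇑g) = ⇑f := by
    rw [← SchwartzMap.fourier_coe, hg, FourierTransform.fourier_fourierInv_eq]
  have hgi : Integrable (⇑g) volume := g.integrable
  have key : ∀ (P : Measure ℝ) [IsProbabilityMeasure P],
      ∫ ξ, (VectorFourier.fourierIntegral Real.fourierChar P (LinearMap.mul ℝ ℝ) (φc s) ξ) •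
        (g ξ) ∂volume = ∫ x, φc s x * f x ∂P := by
    intro P _
    rw [VectorFourier.integral_fourierIntegral_smul_eq_flip Real.continuous_fourierChar
      (by exact continuous_mul) (φc_integrable s P) hgi]
    rw [mul_flip]
    have : ∀ x : ℝ, VectorFourier.fourierIntegral Real.fourierChar volume
        (LinearMap.mul ℝ ℝ) (⇑g) x = f x := fun x => by
        rw [← congrFun hgF x, Real.fourier_real_eq]; rfl
    simp_rw [this, smul_eq_mul]
  rw [← key P₁, ← key P₂]
  apply integral_congr_ae
  apply ae_of_all
  intro ξ
  show VectorFourier.fourierIntegral Real.fourierChar P₁ (LinearMap.mul ℝ ℝ) (φc s) ξ • g ξ =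
    VectorFourier.fourierIntegral Real.fourierChar P₂ (LinearMap.mul ℝ ℝ) (φc s) ξ • g ξ
  rw [fourier_series hs P₁ ξ, fourier_series hs P₂ ξ]
  simp_rw [h]

/-- A smooth compactly supported function is a Schwartz map. -/
def ofCompactSupport (g : ℝ → ℂ) (hc : ContDiff ℝ ((⊤ : ℕ∞) : WithTop ℕ∞) g) (hsupp : HasCompactSupport g) :
    SchwartzMap ℝ ℂ where
  toFun := g
  smooth' := hc
  decay' := by
    intro k n
    obtain ⟨x₀, hx₀⟩ := (continuous_norm.comp continuous_id |>.pow k |>.mul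
      ((hc.continuous_iteratedFDeriv (mod_cast le_top)).norm)).exists_forall_ge_of_hasCompactSupport
      (((hsupp.iteratedFDeriv n).norm).mul_left)
    exact ⟨_, hx₀⟩

end StmtAux13

namespace StmtAux13

/-- bump functions approximating the indicator of `Iic a` -/
def B (a : ℝ) (n : ℕ) : ContDiffBump (a - ((n : ℝ) + 1)) where
  rIn := (n : ℝ) + 1
  rOut := (n : ℝ) + 1 + ((n : ℝ) + 1)⁻¹
  rIn_pos := by positivity
  rIn_lt_rOut := by
    have : (0:ℝ) < ((n : ℝ) + 1)⁻¹ := by positivity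
    linarith

lemma B_one {a : ℝ} {n : ℕ} {x : ℝ} (hxa : x ≤ a) (hn : a - x ≤ (n : ℝ)) : (B a n) x = 1 := by
  apply (B a n).one_of_mem_closedBall
  rw [Metric.mem_closedBall, Real.dist_eq]
  show |x - (a - ((n : ℝ) + 1))| ≤ (n : ℝ) + 1
  rw [abs_le]
  constructor <;> linarith

lemma B_zero {a : ℝ} {n : ℕ} {x : ℝ} (hxa : a < x) (hn : ((n : ℝ) + 1)⁻¹ ≤ x - a) :
    (B a n) x = 0 := by
  apply (B a n).zero_of_le_dist
  rw [Real.dist_eq]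
  show (n : ℝ) + 1 + ((n : ℝ) + 1)⁻¹ ≤ |x - (a - ((n : ℝ) + 1))|
  rw [_root_.abs_of_nonneg (by linarith)]
  linarith

lemma iic_eq (hs : 0 < s) (P₁ P₂ : Measure ℝ)
    [IsProbabilityMeasure P₁] [IsProbabilityMeasure P₂]
    (h : ∀ j : ℕ, ∫ x, x ^ j * Real.exp (-(x ^ 2) / (2 * s ^ 2)) ∂P₁ =
      ∫ x, x ^ j * Real.exp (-(x ^ 2) / (2 * s ^ 2)) ∂P₂) (a : ℝ) :
    ∫ x, (Iic a).indicator (fun x => Real.exp (-(x ^ 2) / (2 * s ^ 2))) x ∂P₁ =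
      ∫ x, (Iic a).indicator (fun x => Real.exp (-(x ^ 2) / (2 * s ^ 2))) x ∂P₂ := by
  set φ : ℝ → ℝ := fun x => Real.exp (-(x ^ 2) / (2 * s ^ 2)) with hφdef
  have hφ1 : ∀ x, φ x ≤ 1 := fun x => norm_φc_le_one s x |>.trans_eq' (by
    rw [φc, Complex.norm_real, Real.norm_eq_abs, Real.abs_exp])
  have hφ0 : ∀ x, 0 ≤ φ x := fun x => Real.exp_nonneg _
  have hφcont : Continuous φ := Real.continuous_exp.comp (by continuity)
  -- bump-weighted integrals coincide
  have hreal : ∀ n : ℕ, ∫ x, φ x * (B a n) x ∂P₁ = ∫ x, φ x * (B a n) x ∂P₂ := by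
    intro n
    set gS : SchwartzMap ℝ ℂ := ofCompactSupport (fun x => ((B a n) x : ℂ))
      (Complex.ofRealCLM.contDiff.comp (((B a n).contDiff : ContDiff ℝ ((⊤ : ℕ∞) : WithTop ℕ∞) (⇑(B a n)))))
      (((B a n).hasCompactSupport).comp_left (g := fun r : ℝ => (r : ℂ)) (by simp)) with hgS
    have conv1 : ∀ (P : Measure ℝ), ∫ x, φc s x * gS x ∂P =
        ((∫ x, φ x * (B a n) x ∂P : ℝ) : ℂ) := by
      intro P
      calc ∫ x, φc s x * gS x ∂P = ∫ x, ((φ x * (B a n) x : ℝ) : ℂ) ∂P := by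
            apply integral_congr_ae (ae_of_all _ fun x => ?_)
            show φc s x * ((B a n) x : ℂ) = (((φ x * (B a n) x : ℝ)) : ℂ)
            rw [Complex.ofReal_mul]
            rfl
        _ = ((∫ x, φ x * (B a n) x ∂P : ℝ) : ℂ) := integral_ofReal
    have := schwartz_eq hs P₁ P₂ h gS
    rw [conv1 P₁, conv1 P₂] at this
    exact_mod_cast this
  -- dominated convergence
  have hDCT : ∀ (P : Measure ℝ) [IsProbabilityMeasure P],
      Tendsto (fun n => ∫ x, φ x * (B a n) x ∂P) atTop
        (𝓝 (∫ x, (Iic a).indicator φ x ∂P)) := by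
    intro P _
    apply tendsto_integral_of_dominated_convergence (fun _ => (1 : ℝ))
    · intro n
      exact (hφcont.mul (B a n).continuous).aestronglyMeasurable
    · exact integrable_const 1
    · intro n
      apply ae_of_all _ fun x => ?_
      rw [Real.norm_eq_abs, _root_.abs_of_nonneg (mul_nonneg (hφ0 x) (B a n).nonneg)]
      calc φ x * (B a n) x ≤ 1 * 1 :=
        mul_le_mul (hφ1 x) (B a n).le_one (B a n).nonneg zero_le_one
      _ = 1 := by ring
    · apply ae_of_all _ fun x => ?_
      rcases le_or_gt x a with hx | hx
      · rw [Set.indicator_of_mem (mem_Iic.mpr hx) φ]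
        apply Tendsto.congr' _ tendsto_const_nhds
        filter_upwards [eventually_ge_atTop ⌈a - x⌉₊] with n hn
        rw [B_one hx ((Nat.le_ceil _).trans (by exact_mod_cast hn)), mul_one]
      · rw [Set.indicator_of_notMem (by simpa using not_le.mpr hx : x ∉ Iic a) φ]
        apply Tendsto.congr' _ tendsto_const_nhds
        filter_upwards [eventually_ge_atTop ⌈(x - a)⁻¹⌉₊] with n hn
        rw [B_zero hx ?_, mul_zero]
        rw [inv_le_comm₀ (by positivity) (by linarith)]
        calc (x - a)⁻¹ ≤ (⌈(x - a)⁻¹⌉₊ : ℝ) := Nat.le_ceil _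
          _ ≤ (n : ℝ) + 1 := by
            have : (⌈(x - a)⁻¹⌉₊ : ℝ) ≤ (n : ℝ) := by exact_mod_cast hn
            linarith
  exact tendsto_nhds_unique (hDCT P₁) ((hDCT P₂).congr fun n => (hreal n).symm)

end StmtAux13

end StmtAux13

open StmtAux13 in
/-- If all Gaussian-kernel-weighted moments of two probability
measures coincide, the measures are equal. -/
theorem stmt13 (s : ℝ) (hs : 0 < s) (P₁ P₂ : Measure ℝ)
    [IsProbabilityMeasure P₁] [IsProbabilityMeasure P₂]
    (h : ∀ j : ℕ, ∫ x, x ^ j * Real.exp (-(x ^ 2) / (2 * s ^ 2)) ∂P₁ =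
      ∫ x, x ^ j * Real.exp (-(x ^ 2) / (2 * s ^ 2)) ∂P₂) :
    P₁ = P₂ := by
  set φ : ℝ → ℝ := fun x => Real.exp (-(x ^ 2) / (2 * s ^ 2)) with hφdef
  set d : ℝ → ENNReal := fun x => ENNReal.ofReal (φ x) with hd
  have hφcont : Continuous φ := Real.continuous_exp.comp (by continuity)
  have hdmeas : Measurable d := ENNReal.measurable_ofReal.comp hφcont.measurable
  have hφ1 : ∀ x, φ x ≤ 1 := fun x => by
    rw [hφdef]
    rw [Real.exp_le_one_iff]
    apply div_nonpos_of_nonpos_of_nonneg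
    · simp [sq_nonneg]
    · positivity
  have hφint : ∀ (P : Measure ℝ) [IsProbabilityMeasure P], Integrable φ P := by
    intro P _
    refine Integrable.mono' (integrable_const 1) hφcont.aestronglyMeasurable
      (ae_of_all _ fun x => ?_)
    rw [Real.norm_eq_abs, _root_.abs_of_nonneg (Real.exp_nonneg _)]
    exact hφ1 x
  have hQfin : ∀ (P : Measure ℝ) [IsProbabilityMeasure P],
      IsFiniteMeasure (P.withDensity d) := by
    intro P _
    constructor
    rw [withDensity_apply _ MeasurableSet.univ, Measure.restrict_univ]
    calc ∫⁻ x, d x ∂P ≤ ∫⁻ _, 1 ∂P :=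
          lintegral_mono fun x => ENNReal.ofReal_le_one.mpr (hφ1 x)
      _ = 1 := by simp
      _ < ⊤ := ENNReal.one_lt_top
  have hQIic : ∀ (P : Measure ℝ) [IsProbabilityMeasure P], ∀ a : ℝ,
      (P.withDensity d) (Iic a) = ENNReal.ofReal (∫ x, (Iic a).indicator φ x ∂P) := by
    intro P _ a
    rw [withDensity_apply _ measurableSet_Iic, integral_indicator measurableSet_Iic,
      ofReal_integral_eq_lintegral_ofReal ((hφint P).restrict)
        (ae_of_all _ fun x => Real.exp_nonneg _)]
  have hQ : P₁.withDensity d = P₂.withDensity d := by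
    have := hQfin P₁
    apply Measure.ext_of_Iic
    intro a
    rw [hQIic P₁ a, hQIic P₂ a, iic_eq hs P₁ P₂ h a]
  have hrec : ∀ (P : Measure ℝ),
      (P.withDensity d).withDensity (fun x => (d x)⁻¹) = P := fun P =>
    withDensity_inv_same hdmeas
      (ae_of_all _ fun x => by
        simp only [hd, ne_eq, ENNReal.ofReal_eq_zero, not_le]
        exact Real.exp_pos _)
      (ae_of_all _ fun x => ENNReal.ofReal_ne_top)
  calc P₁ = (P₁.withDensity d).withDensity (fun x => (d x)⁻¹) := (hrec P₁).symm
    _ = (P₂.withDensity d).withDensity (fun x => (d x)⁻¹) := by rw [hQ]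
    _ = P₂ := hrec P₂
end

section
/- Let h(x) = sin(2π ln x) for x > 0 and let f_{0,1}(x) = (x√(2π))⁻¹ exp(−(ln x)²/2) be the standard log-normal density. Then for every nonnegative integer j, ∫₀^∞ x^j h(x) f_{0,1}(x) dx = 0. -/
open Real MeasureTheory

lemma odd_integral_zero {g : ℝ → ℝ} (hg : ∀ x, g (-x) = -g x) : ∫ x : ℝ, g x = 0 := by
  have h := integral_neg_eq_self g (volume : Measure ℝ)
  simp only [hg, integral_neg] at h
  linarith

/-- The Stieltjes perturbation `h(x) = sin(2π ln x)` is orthogonal to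
all monomials against the standard log-normal density:
`∫₀^∞ x^j sin(2π ln x) f_{0,1}(x) dx = 0`. -/
theorem stmt16 (j : ℕ) :
    ∫ x in Set.Ioi (0 : ℝ), x ^ j * Real.sin (2 * π * Real.log x) *
      ((x * Real.sqrt (2 * π))⁻¹ * Real.exp (-(Real.log x) ^ 2 / 2)) = 0 := by
  set F : ℝ → ℝ := fun x => x ^ j * Real.sin (2 * π * Real.log x) *
      ((x * Real.sqrt (2 * π))⁻¹ * Real.exp (-(Real.log x) ^ 2 / 2)) with hF
  have himg : Real.exp '' Set.univ = Set.Ioi (0 : ℝ) := by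
    ext x
    constructor
    · rintro ⟨t, -, rfl⟩; exact Real.exp_pos t
    · intro hx; exact ⟨Real.log x, trivial, Real.exp_log hx⟩
  have hcv : ∫ x in Set.Ioi (0:ℝ), F x = ∫ t : ℝ, |Real.exp t| • F (Real.exp t) := by
    rw [← himg,
      integral_image_eq_integral_abs_deriv_smul MeasurableSet.univ
        (fun x _ => (Real.hasDerivAt_exp x).hasDerivWithinAt)
        (Real.exp_injective.injOn) F,
      MeasureTheory.setIntegral_univ]
  rw [hcv]
  have hsimp : ∀ t : ℝ, |Real.exp t| • F (Real.exp t)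
      = (Real.sqrt (2 * π))⁻¹ * (Real.exp ((j : ℝ) * t - t ^ 2 / 2) * Real.sin (2 * π * t)) := by
    intro t
    have h1 : Real.log (Real.exp t) = t := Real.log_exp t
    have h2 : (Real.exp t) ^ j = Real.exp ((j : ℝ) * t) := by
      rw [← Real.exp_nat_mul]
    have h3 : Real.exp ((j:ℝ) * t - t ^ 2 / 2)
        = Real.exp ((j:ℝ) * t) * Real.exp (-(t ^ 2) / 2) := by
      rw [← Real.exp_add]; ring_nf
    rw [hF]
    simp only [smul_eq_mul, h1, h2, abs_of_pos (Real.exp_pos t), h3, neg_div]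
    have he := Real.exp_ne_zero t
    have hs : Real.sqrt (2 * π) ≠ 0 :=
      ne_of_gt (Real.sqrt_pos.mpr (by positivity))
    field_simp
  simp only [hsimp]
  rw [MeasureTheory.integral_const_mul]
  set G : ℝ → ℝ := fun t => Real.exp ((j : ℝ) * t - t ^ 2 / 2) * Real.sin (2 * π * t) with hG
  have hshift : ∫ t : ℝ, G t = ∫ u : ℝ, G (u + (j : ℝ)) := by
    rw [integral_add_right_eq_self G (j : ℝ)]
  have hGodd : ∀ u : ℝ, G (-u + (j : ℝ)) = -G (u + (j : ℝ)) := by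
    intro u
    have key : ∀ v : ℝ, G (v + (j : ℝ))
        = Real.exp ((j:ℝ)^2/2) * (Real.exp (-(v ^ 2) / 2) * Real.sin (2 * π * v)) := by
      intro v
      rw [hG]
      have harg : (j : ℝ) * (v + (j : ℝ)) - (v + (j : ℝ)) ^ 2 / 2
          = (j:ℝ)^2/2 + (-(v ^ 2) / 2) := by ring
      have hsin : Real.sin (2 * π * (v + (j : ℝ))) = Real.sin (2 * π * v) := by
        have : 2 * π * (v + (j : ℝ)) = 2 * π * v + (j : ℤ) * (2 * π) := by
          push_cast; ring
        rw [this, Real.sin_add_int_mul_two_pi]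
      simp only [harg, hsin, Real.exp_add]
      ring
    rw [key u, key (-u)]
    simp only [neg_sq, Real.sin_neg, mul_neg]
  rw [hshift]
  have : ∫ u : ℝ, G (u + (j : ℝ)) = 0 := odd_integral_zero hGodd
  rw [this, mul_zero]
end
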